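/- arXiv:1111.2262 — 3 statements merged into one kernel-verified Lean document; each statement's English description precedes it below -/
import Mathlib

section
/- For all positive integers m and N with N ≥ 64 (ln 4)² (m+1)², there exists a real symmetric positive semidefinite N×N matrix K with all diagonal entries equal to 1 such that for every subset S ⊆ {1,…,N} of size at most m, the Nyström approximation error satisfies ‖K − K_b K̂† K_b^⊤‖₂ ≥ N/(4m). -/
open Matrix
open scoped Matrix.Norms.L2Operator

/-- `P` is the Moore–Penrose pseudoinverse of `A`. -/
def IsMoorePenroseInv {n : Type*} [Fintype n] (A P : Matrix n n ℝ) : Prop :=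
  A * P * A = A ∧ P * A * P = P ∧ (A * P)ᵀ = A * P ∧ (P * A)ᵀ = P * A

/-- for all positive integers `m` and `N` with `N ≥ 64 (ln 4)² (m+1)²`,
there exists a real symmetric PSD `N × N` matrix `K` with unit diagonal such that for
every subset `S ⊆ {1,…,N}` with `|S| ≤ m`, the Nyström approximation error satisfies
`‖K − K_b K̂† K_bᵀ‖₂ ≥ N / (4 m)`. -/
theorem stmt2 (m N : ℕ) (hm : 0 < m) (hN : 0 < N)
    (hNm : (N : ℝ) ≥ 64 * (Real.log 4) ^ 2 * (m + 1) ^ 2) :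
    ∃ K : Matrix (Fin N) (Fin N) ℝ, K.PosSemidef ∧ (∀ i, K i i = 1) ∧
      ∀ S : Finset (Fin N), S.card ≤ m →
        ∀ Kdag : Matrix {x // x ∈ S} {x // x ∈ S} ℝ,
          IsMoorePenroseInv (K.submatrix (fun i : {x // x ∈ S} => (i : Fin N))
              (fun i : {x // x ∈ S} => (i : Fin N))) Kdag →
          ‖K - (K.submatrix id (fun i : {x // x ∈ S} => (i : Fin N)) * Kdag *
              (K.submatrix id (fun i : {x // x ∈ S} => (i : Fin N)))ᵀ)‖
            ≥ (N : ℝ) / (4 * m) := by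
  -- basic real bound:  N ≥ 64 (m+1)²
  have hlog : (1:ℝ) ≤ Real.log 4 := by
    rw [Real.le_log_iff_exp_le (by norm_num)]
    exact le_trans Real.exp_one_lt_d9.le (by norm_num)
  have hlog2 : (1:ℝ) ≤ (Real.log 4) ^ 2 := by nlinarith
  have hMN : (N : ℝ) ≥ 64 * ((m:ℝ) + 1) ^ 2 := by
    nlinarith [mul_le_mul_of_nonneg_right hlog2 (sq_nonneg ((m:ℝ)+1))]
  have hm1 : (1:ℝ) ≤ (m:ℝ) := by exact_mod_cast hm
  set q := m + 1 with hqdef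
  have hq : 0 < q := Nat.succ_pos m
  set f : Fin N → Fin q := fun i => ⟨i.val % q, Nat.mod_lt _ hq⟩ with hf
  set K : Matrix (Fin N) (Fin N) ℝ := Matrix.of fun i j => if f i = f j then 1 else 0 with hK
  have hPSD : K.PosSemidef := by
    have : K = (Matrix.of fun (k : Fin q) (i : Fin N) => if f i = k then (1:ℝ) else 0)ᴴ *
        (Matrix.of fun (k : Fin q) (i : Fin N) => if f i = k then (1:ℝ) else 0) := by
      ext i j
      simp [Matrix.mul_apply, Matrix.conjTranspose_apply, hK, ite_and, mul_ite, ite_mul]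
    rw [this]
    exact Matrix.posSemidef_conjTranspose_mul_self _
  refine ⟨K, hPSD, fun i => by simp [hK], ?_⟩
  intro S hS Kdag _hMP
  -- find a residue class r missed by S
  have himg : S.image f ≠ Finset.univ := by
    intro h
    have h1 : (Finset.univ : Finset (Fin q)).card ≤ S.card := h ▸ Finset.card_image_le
    rw [Finset.card_univ, Fintype.card_fin] at h1
    omega
  obtain ⟨r, hr⟩ : ∃ r : Fin q, r ∉ S.image f := by
    by_contra h
    push_neg at h
    exact himg (Finset.eq_univ_iff_forall.mpr h)
  have hS0 : ∀ s ∈ S, f s ≠ r := fun s hs h => hr (Finset.mem_image.mpr ⟨s, hs, h⟩)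
  set T : Finset (Fin N) := Finset.univ.filter (fun i => f i = r) with hT
  set c : ℕ := T.card with hc
  -- c ≥ N / q
  have hcq : N / q ≤ c := by
    have : ∀ j : Fin (N / q), (⟨r.val + j.val * q, by
        have h1 : j.val + 1 ≤ N / q := j.isLt
        have h2 : (j.val + 1) * q ≤ (N / q) * q := Nat.mul_le_mul_right _ h1
        have h3 : (N / q) * q ≤ N := Nat.div_mul_le_self _ _
        calc r.val + j.val * q < q + j.val * q := by omega
          _ = (j.val + 1) * q := by ring
          _ ≤ N := le_trans h2 h3⟩ : Fin N) ∈ T := by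
      intro j
      simp only [hT, Finset.mem_filter, Finset.mem_univ, true_and, hf]
      apply Fin.ext
      simp [Nat.add_mul_mod_self_right, Nat.mod_eq_of_lt r.isLt]
    have h4 := Finset.card_le_card_of_injOn
      (f := fun j : Fin (N / q) => (⟨r.val + j.val * q, by
        have h1 : j.val + 1 ≤ N / q := j.isLt
        have h2 : (j.val + 1) * q ≤ (N / q) * q := Nat.mul_le_mul_right _ h1
        have h3 : (N / q) * q ≤ N := Nat.div_mul_le_self _ _
        calc r.val + j.val * q < q + j.val * q := by omega
          _ = (j.val + 1) * q := by ring
          _ ≤ N := le_trans h2 h3⟩ : Fin N))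
      (s := (Finset.univ : Finset (Fin (N / q)))) (t := T)
      (fun j _ => this j)
      (by
        intro a _ b _ hab
        have h5 := Fin.val_eq_of_eq hab
        simp only at h5
        exact Fin.ext (Nat.eq_of_mul_eq_mul_right hq (by omega)))
    simpa using h4
  -- rows in class r of the Nyström approximation vanish
  set Kb : Matrix (Fin N) {x // x ∈ S} ℝ :=
    K.submatrix id (fun i : {x // x ∈ S} => (i : Fin N)) with hKb
  have hKb0 : ∀ i : Fin N, f i = r → ∀ s : {x // x ∈ S}, Kb i s = 0 := by
    intro i hi s
    simp only [hKb, Matrix.submatrix_apply, id_eq, hK, Matrix.of_apply, ite_eq_right_iff]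
    intro h
    exact absurd (h ▸ hi) (hS0 s s.2)
  have hrow : ∀ i : Fin N, f i = r → ∀ j, (Kb * Kdag * Kbᵀ) i j = 0 := by
    intro i hi j
    simp only [Matrix.mul_apply]
    refine Finset.sum_eq_zero fun t _ => ?_
    have h1 : (∑ s : {x // x ∈ S}, Kb i s * Kdag s t) = 0 :=
      Finset.sum_eq_zero fun s _ => by rw [hKb0 i hi s, zero_mul]
    rw [h1, zero_mul]
  set E : Matrix (Fin N) (Fin N) ℝ := K - Kb * Kdag * Kbᵀ with hE
  set u : EuclideanSpace ℝ (Fin N) := WithLp.toLp 2 (fun j => if f j = r then (1:ℝ) else 0) with hu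
  -- (E *ᵥ u) i = c for i in class r
  have hmv : ∀ i : Fin N, f i = r → (E *ᵥ u) i = c := by
    intro i hi
    simp only [hE, Matrix.mulVec, dotProduct, Matrix.sub_apply]
    have h3 : ∀ j : Fin N, (K i j - (Kb * Kdag * Kbᵀ) i j) * u j
        = if f j = r then 1 else 0 := by
      intro j
      rw [hrow i hi j, sub_zero]
      by_cases h : f j = r
      · simp [hK, hu, h, hi]
      · simp [hK, hu, h, hi]
    simp only [h3]
    rw [Finset.sum_boole]
  -- norms
  have hcnn : (0:ℝ) ≤ (c:ℝ) := Nat.cast_nonneg _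
  have hnu : ‖u‖ = Real.sqrt c := by
    rw [EuclideanSpace.norm_eq]
    congr 1
    have : ∀ j : Fin N, ‖u j‖ ^ 2 = if f j = r then 1 else 0 := by
      intro j; by_cases h : f j = r <;> simp [hu, h]
    simp only [this]
    rw [Finset.sum_boole]
  have hnv : (c:ℝ) * Real.sqrt c ≤ ‖(EuclideanSpace.equiv (Fin N) ℝ).symm <| E *ᵥ u‖ := by
    rw [EuclideanSpace.norm_eq]
    have hle : (c:ℝ) * (c:ℝ)^2 ≤ ∑ j, ‖((EuclideanSpace.equiv (Fin N) ℝ).symm (E *ᵥ u)) j‖ ^ 2 := by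
      have : ∀ j ∈ T, ‖((EuclideanSpace.equiv (Fin N) ℝ).symm (E *ᵥ u)) j‖ ^ 2 = (c:ℝ)^2 := by
        intro j hj
        have hjr : f j = r := (Finset.mem_filter.mp hj).2
        have : ((EuclideanSpace.equiv (Fin N) ℝ).symm (E *ᵥ u)) j = (E *ᵥ u) j := rfl
        rw [this, hmv j hjr]
        simp [sq_abs]
      calc (c:ℝ) * (c:ℝ)^2 = ∑ _j ∈ T, (c:ℝ)^2 := by
            rw [Finset.sum_const, ← hc, nsmul_eq_mul]
        _ = ∑ j ∈ T, ‖((EuclideanSpace.equiv (Fin N) ℝ).symm (E *ᵥ u)) j‖ ^ 2 :=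
            (Finset.sum_congr rfl this).symm
        _ ≤ ∑ j, ‖((EuclideanSpace.equiv (Fin N) ℝ).symm (E *ᵥ u)) j‖ ^ 2 :=
            Finset.sum_le_sum_of_subset_of_nonneg (Finset.subset_univ _)
              (fun j _ _ => by positivity)
    calc (c:ℝ) * Real.sqrt c = Real.sqrt ((c:ℝ) * (c:ℝ)^2) := by
          rw [Real.sqrt_mul hcnn, Real.sqrt_sq hcnn]; ring
      _ ≤ _ := Real.sqrt_le_sqrt hle
  have hbound := Matrix.l2_opNorm_mulVec E u
  rw [hnu] at hbound
  have hkey : (c:ℝ) * Real.sqrt c ≤ ‖E‖ * Real.sqrt c := le_trans hnv hbound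
  -- c ≥ 1
  have hNq : q ≤ N := by
    have : ((q:ℕ):ℝ) ≤ (N:ℝ) := by
      push_cast [hqdef]
      nlinarith [sq_nonneg ((m:ℝ)+1)]
    exact_mod_cast this
  have hc1 : 1 ≤ c := le_trans (Nat.one_le_div_iff hq |>.mpr hNq) hcq
  have hsqrtpos : 0 < Real.sqrt c := Real.sqrt_pos.mpr (by exact_mod_cast hc1)
  have hEc : (c:ℝ) ≤ ‖E‖ := le_of_mul_le_mul_right (by linarith [hkey]) hsqrtpos
  -- c ≥ N / (4m) in ℝ
  have hdiv : (N:ℝ) < ((N / q : ℕ) + 1) * q := by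
    have h0 : N = N / q * q + N % q := (Nat.div_add_mod N q).symm.trans (by ring)
    have h1 : N % q < q := Nat.mod_lt N hq
    have h2 : N < (N / q + 1) * q := by
      calc N = N / q * q + N % q := h0
        _ < N / q * q + q := by omega
        _ = (N / q + 1) * q := by ring
    exact_mod_cast h2
  have hcdivreal : ((N / q : ℕ) : ℝ) ≤ (c:ℝ) := by exact_mod_cast hcq
  have hfin : (N:ℝ) / (4 * m) ≤ (c:ℝ) := by
    rw [div_le_iff₀ (by positivity)]
    have hqr : ((q:ℕ):ℝ) = (m:ℝ) + 1 := by push_cast [hqdef]; ring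
    have h1 : (N:ℝ) < ((N / q : ℕ) : ℝ) * ((m:ℝ)+1) + ((m:ℝ)+1) := by
      rw [← hqr]; push_cast at hdiv ⊢; linarith
    nlinarith [hcdivreal, hMN, hm1, mul_le_mul_of_nonneg_right hcdivreal
      (show (0:ℝ) ≤ (m:ℝ)+1 by linarith)]
  exact le_trans hfin hEc
end

section
/- Let H be a real Hilbert space and v₁, …, v_N ∈ H with ‖v_i‖ ≤ 1 for all i. Let J₁, …, J_m be independent random indices, each uniformly distributed on {1,…,N}. Define the bounded linear operators L_N f = (1/N) Σ_{i=1}^N ⟨v_i, f⟩ v_i and L_m f = (1/m) Σ_{k=1}^m ⟨v_{J_k}, f⟩ v_{J_k} on H. Then for every δ ∈ (0,1), with probability at least 1 − δ, the operator norm satisfies ‖L_N − L_m‖ ≤ 4 ln(2/δ)/√m. -/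
set_option synthInstance.maxHeartbeats 1000000
set_option maxHeartbeats 3000000

-- exp y ≤ 1 + y + y^2 for |y| ≤ 1
lemma exp_le_quad {y : ℝ} (h : |y| ≤ 1) : Real.exp y ≤ 1 + y + y ^ 2 := by
  have hb := Real.exp_bound h (by norm_num : 0 < 2)
  have h2 : ∑ i ∈ Finset.range 2, y ^ i / (Nat.factorial i) = 1 + y := by
    simp [Finset.sum_range_succ]
  rw [h2] at hb
  have h3 : |y| ^ 2 * ((2 : ℕ).succ / ((Nat.factorial 2) * 2)) ≤ y ^ 2 := by
    rw [sq_abs]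
    norm_num [Nat.factorial]
    nlinarith [sq_nonneg y]
  have := abs_le.1 hb
  linarith [this.2, h3]

lemma mgf_step {N : ℕ} (hN : 0 < N) (x : Fin N → ℝ) (c lam : ℝ)
    (hsum : ∑ a, x a = 0) (hb : ∀ a, |x a| ≤ c) (hlam : 0 ≤ lam) (hlc : lam * c ≤ 1) :
    ∑ a, Real.exp (lam * x a) ≤ N * Real.exp (lam ^ 2 * c ^ 2) := by
  have hc : 0 ≤ c := le_trans (abs_nonneg _) (hb ⟨0, hN⟩)
  have key : ∀ a, Real.exp (lam * x a) ≤ 1 + lam * x a + lam ^ 2 * c ^ 2 := by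
    intro a
    have h1 : |lam * x a| ≤ 1 := by
      rw [abs_mul, abs_of_nonneg hlam]
      calc lam * |x a| ≤ lam * c := by nlinarith [hb a]
      _ ≤ 1 := hlc
    calc Real.exp (lam * x a) ≤ 1 + lam * x a + (lam * x a) ^ 2 := exp_le_quad h1
      _ ≤ 1 + lam * x a + lam ^ 2 * c ^ 2 := by
          have := hb a
          have := abs_nonneg (x a)
          have h2 : (lam * x a) ^ 2 ≤ lam ^ 2 * c ^ 2 := by
            rw [mul_pow]
            have : x a ^ 2 ≤ c ^ 2 := by rw [← sq_abs]; nlinarith [hb a, abs_nonneg (x a)]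
            nlinarith [sq_nonneg lam]
          linarith
  calc ∑ a, Real.exp (lam * x a) ≤ ∑ a, (1 + lam * x a + lam ^ 2 * c ^ 2) :=
        Finset.sum_le_sum fun a _ => key a
    _ = N * (1 + lam ^ 2 * c ^ 2) := by
        simp [Finset.sum_add_distrib, ← Finset.mul_sum, hsum]; ring
    _ ≤ N * Real.exp (lam ^ 2 * c ^ 2) := by
        have := Real.add_one_le_exp (lam ^ 2 * c ^ 2)
        have : (1:ℝ) + lam ^ 2 * c ^ 2 ≤ Real.exp (lam ^ 2 * c ^ 2) := by linarith
        have hN' : (0:ℝ) ≤ (N:ℝ) := Nat.cast_nonneg N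
        nlinarith

lemma mcdiarmid_mgf {N : ℕ} (hN : 0 < N) (c lam : ℝ) (hlam : 0 ≤ lam)
    (hlc : lam * c ≤ 1) :
    ∀ (m : ℕ) (f : (Fin m → Fin N) → ℝ),
      (∀ (k : Fin m) (J : Fin m → Fin N) (a : Fin N), |f (Function.update J k a) - f J| ≤ c) →
      ∑ J, Real.exp (lam * (f J - (∑ J', f J') / (N:ℝ) ^ m))
        ≤ (N:ℝ) ^ m * Real.exp (m * (lam ^ 2 * c ^ 2)) := by
  have hNR : (0:ℝ) < (N:ℝ) := by exact_mod_cast hN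
  intro m
  induction m with
  | zero =>
      intro f _
      haveI : Unique (Fin 0 → Fin N) := ⟨⟨fun i => i.elim0⟩, fun J => funext fun i => i.elim0⟩
      rw [Finset.sum_eq_single_of_mem default (Finset.mem_univ _)
        (fun b _ hb => absurd (Subsingleton.elim b default) hb),
        Finset.sum_eq_single_of_mem default (Finset.mem_univ _)
        (fun b _ hb => absurd (Subsingleton.elim b default) hb)]
      simp
  | succ m ih =>
      intro f hf
      set μ : ℝ := (∑ J', f J') / (N:ℝ) ^ (m+1) with hμ
      set h : (Fin m → Fin N) → ℝ := fun t => (∑ a, f (Fin.cons a t)) / N with hh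
      have hsum_eq : ∀ (F : (Fin (m+1) → Fin N) → ℝ),
          ∑ J, F J = ∑ t : Fin m → Fin N, ∑ a : Fin N, F (Fin.cons a t) := by
        intro F
        rw [← Equiv.sum_comp (Fin.consEquiv (fun _ : Fin (m+1) => Fin N)) F,
          Fintype.sum_prod_type]
        rw [Finset.sum_comm]
        rfl
      have hmean : (∑ t, h t) / (N:ℝ) ^ m = μ := by
        have e1 : ∑ t, h t = (∑ J, f J) / (N:ℝ) := by
          rw [hsum_eq f, hh, ← Finset.sum_div]
        rw [e1, hμ, div_div, pow_succ]
        ring_nf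
      have hdiffh : ∀ (k : Fin m) (t : Fin m → Fin N) (a : Fin N),
          |h (Function.update t k a) - h t| ≤ c := by
        intro k t a
        have : h (Function.update t k a) - h t
            = (∑ a' : Fin N, (f (Fin.cons a' (Function.update t k a)) - f (Fin.cons a' t))) / N := by
          rw [hh]; field_simp [Finset.sum_sub_distrib]; rw [Finset.sum_sub_distrib]
        rw [this, abs_div, abs_of_pos hNR, div_le_iff₀ hNR]
        calc |∑ a' : Fin N, (f (Fin.cons a' (Function.update t k a)) - f (Fin.cons a' t))|
            ≤ ∑ a' : Fin N, |f (Fin.cons a' (Function.update t k a)) - f (Fin.cons a' t)| :=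
              Finset.abs_sum_le_sum_abs _ _
          _ ≤ ∑ _a' : Fin N, c := by
              refine Finset.sum_le_sum fun a' _ => ?_
              rw [Fin.cons_update]
              exact hf k.succ (Fin.cons a' t) a
          _ = c * N := by simp [mul_comm]
      have hstep : ∀ t : Fin m → Fin N,
          ∑ a : Fin N, Real.exp (lam * (f (Fin.cons a t) - h t))
            ≤ (N:ℝ) * Real.exp (lam ^ 2 * c ^ 2) := by
        intro t
        refine mgf_step hN (fun a => f (Fin.cons a t) - h t) c lam ?_ ?_ hlam hlc
        · rw [Finset.sum_sub_distrib, hh]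
          field_simp
          rw [Finset.sum_const, Finset.card_univ, Fintype.card_fin, nsmul_eq_mul, mul_div_assoc',
            mul_div_cancel_left₀ _ hNR.ne', sub_self]
        · intro a
          show |f (Fin.cons a t) - h t| ≤ c
          have : f (Fin.cons a t) - h t
              = (∑ a' : Fin N, (f (Fin.cons a t) - f (Fin.cons a' t))) / N := by
            rw [hh, Finset.sum_sub_distrib, Finset.sum_const]
            field_simp
            simp [mul_comm]
          rw [this, abs_div, abs_of_pos hNR, div_le_iff₀ hNR]
          calc |∑ a' : Fin N, (f (Fin.cons a t) - f (Fin.cons a' t))|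
              ≤ ∑ a' : Fin N, |f (Fin.cons a t) - f (Fin.cons a' t)| :=
                Finset.abs_sum_le_sum_abs _ _
            _ ≤ ∑ _a' : Fin N, c := by
                refine Finset.sum_le_sum fun a' _ => ?_
                have e : (Fin.cons a t : Fin (m+1) → Fin N) = Function.update (Fin.cons a' t) 0 a :=
                  (Fin.update_cons_zero (α := fun _ : Fin (m+1) => Fin N)
                    (x := a') (p := t) (z := a)).symm
                rw [e]
                exact hf 0 (Fin.cons a' t) a
            _ = c * N := by simp [mul_comm]
      calc ∑ J, Real.exp (lam * (f J - μ))
          = ∑ t : Fin m → Fin N, ∑ a : Fin N, Real.exp (lam * (f (Fin.cons a t) - μ)) :=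
            hsum_eq _
        _ = ∑ t : Fin m → Fin N, Real.exp (lam * (h t - μ)) *
              ∑ a : Fin N, Real.exp (lam * (f (Fin.cons a t) - h t)) := by
            refine Finset.sum_congr rfl fun t _ => ?_
            rw [Finset.mul_sum]
            refine Finset.sum_congr rfl fun a _ => ?_
            rw [← Real.exp_add]
            ring_nf
        _ ≤ ∑ t : Fin m → Fin N, Real.exp (lam * (h t - μ)) *
              ((N:ℝ) * Real.exp (lam ^ 2 * c ^ 2)) := by
            refine Finset.sum_le_sum fun t _ => ?_
            exact mul_le_mul_of_nonneg_left (hstep t) (Real.exp_nonneg _)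
        _ = ((N:ℝ) * Real.exp (lam ^ 2 * c ^ 2)) *
              ∑ t : Fin m → Fin N, Real.exp (lam * (h t - (∑ t', h t') / (N:ℝ) ^ m)) := by
            rw [← Finset.sum_mul, hmean]; ring
        _ ≤ ((N:ℝ) * Real.exp (lam ^ 2 * c ^ 2)) *
              ((N:ℝ) ^ m * Real.exp (m * (lam ^ 2 * c ^ 2))) := by
            refine mul_le_mul_of_nonneg_left (ih h hdiffh) ?_
            positivity
        _ = (N:ℝ) ^ (m+1) * Real.exp ((m+1 : ℕ) * (lam ^ 2 * c ^ 2)) := by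
            have e2 : Real.exp (((m:ℝ)+1) * (lam ^ 2 * c ^ 2))
                = Real.exp (lam ^ 2 * c ^ 2) * Real.exp ((m:ℝ) * (lam ^ 2 * c ^ 2)) := by
              rw [← Real.exp_add]; ring_nf
            push_cast
            rw [e2, pow_succ]
            ring

lemma var_sum {N : ℕ} (hN : 0 < N) (g : Fin N → ℝ) (hg : ∑ i, g i = 0) :
    ∀ m : ℕ, ∑ J : Fin m → Fin N, (∑ k, g (J k)) ^ 2
      ≤ (m : ℝ) * (N:ℝ) ^ m / N * ∑ i, (g i) ^ 2 := by
  have hNR : (0:ℝ) < (N:ℝ) := by exact_mod_cast hN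
  have hg2 : (0:ℝ) ≤ ∑ i, (g i) ^ 2 := Finset.sum_nonneg fun i _ => sq_nonneg _
  intro m
  induction m with
  | zero =>
      haveI : Unique (Fin 0 → Fin N) := ⟨⟨fun i => i.elim0⟩, fun J => funext fun i => i.elim0⟩
      rw [Finset.sum_eq_single_of_mem default (Finset.mem_univ _)
        (fun b _ hb => absurd (Subsingleton.elim b default) hb)]
      simp
  | succ m ih =>
      have hsum_eq : ∀ (F : (Fin (m+1) → Fin N) → ℝ),
          ∑ J, F J = ∑ t : Fin m → Fin N, ∑ a : Fin N, F (Fin.cons a t) := by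
        intro F
        rw [← Equiv.sum_comp (Fin.consEquiv (fun _ : Fin (m+1) => Fin N)) F,
          Fintype.sum_prod_type]
        rw [Finset.sum_comm]
        rfl
      rw [hsum_eq]
      have expand : ∀ (t : Fin m → Fin N), ∑ a : Fin N, (∑ k : Fin (m+1), g ((Fin.cons a t : Fin (m+1) → Fin N) k)) ^ 2
          = (∑ a, (g a) ^ 2) + 2 * (∑ a, g a) * (∑ k : Fin m, g (t k))
            + (N:ℝ) * (∑ k : Fin m, g (t k)) ^ 2 := by
        intro t
        have e1 : ∀ a : Fin N, ∑ k : Fin (m+1), g ((Fin.cons a t : Fin (m+1) → Fin N) k)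
            = g a + ∑ k : Fin m, g (t k) := by
          intro a
          rw [Fin.sum_univ_succ]
          simp
        simp only [e1]
        simp only [add_sq]
        rw [Finset.sum_add_distrib, Finset.sum_add_distrib, ← Finset.sum_mul,
          Finset.sum_const, Finset.card_univ, Fintype.card_fin, nsmul_eq_mul]
        rw [show ∑ i : Fin N, 2 * g i = 2 * ∑ i : Fin N, g i from (Finset.mul_sum _ _ _).symm]
      calc ∑ t : Fin m → Fin N, ∑ a : Fin N, (∑ k : Fin (m+1), g ((Fin.cons a t : Fin (m+1) → Fin N) k)) ^ 2
          = ∑ t : Fin m → Fin N, ((∑ a, (g a) ^ 2)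
              + 2 * (∑ a, g a) * (∑ k : Fin m, g (t k))
              + (N:ℝ) * (∑ k : Fin m, g (t k)) ^ 2) := by
            exact Finset.sum_congr rfl fun t _ => expand t
        _ = (N:ℝ) ^ m * (∑ a, (g a) ^ 2)
              + (N:ℝ) * ∑ t : Fin m → Fin N, (∑ k : Fin m, g (t k)) ^ 2 := by
            rw [hg]
            rw [Finset.sum_add_distrib, Finset.sum_add_distrib, Finset.sum_const,
              Finset.card_univ, Fintype.card_fun, Fintype.card_fin, Fintype.card_fin,
              ← Finset.mul_sum]
            simp only [Finset.sum_const_zero, add_zero, mul_zero, zero_mul]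
            rw [show ∑ t : Fin m → Fin N, (N:ℝ) * (∑ k : Fin m, g (t k)) ^ 2
              = (N:ℝ) * ∑ t : Fin m → Fin N, (∑ k : Fin m, g (t k)) ^ 2
              from (Finset.mul_sum _ _ _).symm]
            ring
        _ ≤ (N:ℝ) ^ m * (∑ a, (g a) ^ 2)
              + (N:ℝ) * ((m : ℝ) * (N:ℝ) ^ m / N * ∑ i, (g i) ^ 2) := by
            have := mul_le_mul_of_nonneg_left ih (le_of_lt hNR)
            linarith
        _ = ((m:ℝ)+1) * (N:ℝ) ^ (m+1) / N * ∑ i, (g i) ^ 2 := by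
            field_simp
            ring
        _ = ((m+1 : ℕ) : ℝ) * (N:ℝ) ^ (m+1) / N * ∑ i, (g i) ^ 2 := by
            push_cast
            ring

lemma opnorm_le_sqrt {H : Type*} [NormedAddCommGroup H] [InnerProductSpace ℝ H]
    {d : ℕ} (e : Fin d → H) (he : Orthonormal ℝ e)
    {ι : Type*} [Fintype ι] (u : ι → H) (w : ι → Fin d → ℝ)
    (hu : ∀ j, u j = ∑ x, w j x • e x) (c : ι → ℝ) :
    ‖∑ j, c j • (innerSL ℝ (u j)).smulRight (u j)‖
      ≤ Real.sqrt (∑ x, ∑ y, (∑ j, c j * (w j x * w j y)) ^ 2) := by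
  set M : Fin d → Fin d → ℝ := fun x y => ∑ j, c j * (w j x * w j y) with hM
  set S : ℝ := ∑ x, ∑ y, (M x y) ^ 2 with hS
  have hS0 : 0 ≤ S := Finset.sum_nonneg fun x _ => Finset.sum_nonneg fun y _ => sq_nonneg _
  refine ContinuousLinearMap.opNorm_le_bound _ (Real.sqrt_nonneg _) (fun f => ?_)
  set β : Fin d → ℝ := fun y => inner ℝ (e y) f with hβ
  have hinner : ∀ j, (inner ℝ (u j) f : ℝ) = ∑ y, w j y * β y := by
    intro j
    rw [hu j, sum_inner]
    exact Finset.sum_congr rfl fun y _ => real_inner_smul_left _ _ _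
  set γ : Fin d → ℝ := fun x => ∑ y, M x y * β y with hγ
  have happ : (∑ j, c j • (innerSL ℝ (u j)).smulRight (u j)) f = ∑ x, γ x • e x := by
    rw [ContinuousLinearMap.sum_apply]
    have e0 : ∀ (j) (r : ℝ), r • u j = ∑ x, (r * w j x) • e x := by
      intro j r
      rw [hu j, Finset.smul_sum]
      exact Finset.sum_congr rfl fun x _ => smul_smul r (w j x) (e x)
    have e1 : ∀ j, (c j • (innerSL ℝ (u j)).smulRight (u j)) f
        = ∑ x, (c j * (inner ℝ (u j) f : ℝ) * w j x) • e x := by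
      intro j
      simp only [ContinuousLinearMap.smul_apply, ContinuousLinearMap.smulRight_apply,
        innerSL_apply_apply]
      rw [smul_smul]
      exact e0 j _
    simp only [e1]
    rw [Finset.sum_comm]
    refine Finset.sum_congr rfl fun x _ => ?_
    rw [← Finset.sum_smul]
    congr 1
    calc ∑ j, c j * (inner ℝ (u j) f : ℝ) * w j x
        = ∑ j, ∑ y, c j * (w j x * w j y) * β y := by
          refine Finset.sum_congr rfl fun j _ => ?_
          rw [hinner j, Finset.mul_sum, Finset.sum_mul]
          exact Finset.sum_congr rfl fun y _ => by ring
      _ = ∑ y, (∑ j, c j * (w j x * w j y)) * β y := by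
          rw [Finset.sum_comm]
          exact Finset.sum_congr rfl fun y _ => by rw [Finset.sum_mul]
      _ = γ x := rfl
  have hnorm2 : ‖(∑ j, c j • (innerSL ℝ (u j)).smulRight (u j)) f‖ ^ 2 = ∑ x, (γ x) ^ 2 := by
    rw [happ, ← real_inner_self_eq_norm_sq]
    rw [he.inner_sum γ γ Finset.univ]
    simp [RCLike.conj_to_real, sq]
  have hcs : ∀ x, (γ x) ^ 2 ≤ (∑ y, (M x y) ^ 2) * ∑ y, (β y) ^ 2 := by
    intro x
    exact Finset.sum_mul_sq_le_sq_mul_sq _ _ _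
  have hbessel : ∑ y, (β y) ^ 2 ≤ ‖f‖ ^ 2 := by
    have := he.sum_inner_products_le (𝕜 := ℝ) (x := f) (s := Finset.univ)
    calc ∑ y, (β y) ^ 2 = ∑ y, ‖(inner ℝ (e y) f : ℝ)‖ ^ 2 := by
          refine Finset.sum_congr rfl fun y _ => ?_
          rw [Real.norm_eq_abs, sq_abs]
      _ ≤ ‖f‖ ^ 2 := this
  have key : ‖(∑ j, c j • (innerSL ℝ (u j)).smulRight (u j)) f‖ ^ 2 ≤ S * ‖f‖ ^ 2 := by
    rw [hnorm2]
    calc ∑ x, (γ x) ^ 2 ≤ ∑ x, (∑ y, (M x y) ^ 2) * ∑ y, (β y) ^ 2 :=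
          Finset.sum_le_sum fun x _ => hcs x
      _ = S * ∑ y, (β y) ^ 2 := by rw [hS, ← Finset.sum_mul]
      _ ≤ S * ‖f‖ ^ 2 := mul_le_mul_of_nonneg_left hbessel hS0
  calc ‖(∑ j, c j • (innerSL ℝ (u j)).smulRight (u j)) f‖
      = Real.sqrt (‖(∑ j, c j • (innerSL ℝ (u j)).smulRight (u j)) f‖ ^ 2) :=
        (Real.sqrt_sq (norm_nonneg _)).symm
    _ ≤ Real.sqrt (S * ‖f‖ ^ 2) := Real.sqrt_le_sqrt key
    _ = Real.sqrt S * ‖f‖ := by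
        rw [Real.sqrt_mul hS0, Real.sqrt_sq (norm_nonneg _)]

lemma sum_sub_mean_sq {N : ℕ} (p : Fin N → ℝ) (q : ℝ) (hq : (N:ℝ) * q = ∑ i, p i) :
    ∑ i, (p i - q) ^ 2 ≤ ∑ i, p i ^ 2 := by
  have expand : ∑ i, (p i - q) ^ 2
      = ∑ i, p i ^ 2 - 2 * q * (∑ i, p i) + N * q ^ 2 := by
    simp only [sub_sq]
    rw [Finset.sum_add_distrib, Finset.sum_sub_distrib, Finset.sum_const, Finset.card_univ,
      Fintype.card_fin, nsmul_eq_mul]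
    rw [show ∑ i : Fin N, 2 * p i * q = 2 * q * ∑ i, p i by
      rw [Finset.mul_sum]; exact Finset.sum_congr rfl fun i _ => by ring]
  rw [expand, ← hq]
  nlinarith [sq_nonneg q, Nat.cast_nonneg (α := ℝ) N]

lemma norm_rankone_le {H : Type*} [NormedAddCommGroup H] [InnerProductSpace ℝ H]
    (u : H) (hu : ‖u‖ ≤ 1) : ‖(innerSL ℝ u).smulRight u‖ ≤ 1 := by
  rw [ContinuousLinearMap.norm_smulRight_apply, innerSL_apply_norm]
  nlinarith [norm_nonneg u]

lemma avg_opnorm_le {H : Type*} [NormedAddCommGroup H] [InnerProductSpace ℝ H]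
    {ι : Type*} [Fintype ι] (u : ι → H) (hu : ∀ j, ‖u j‖ ≤ 1)
    (r : ℝ) (hr : (Fintype.card ι : ℝ) * r = 1) (hr0 : 0 ≤ r) :
    ‖r • ∑ j, (innerSL ℝ (u j)).smulRight (u j)‖ ≤ 1 := by
  calc ‖r • ∑ j, (innerSL ℝ (u j)).smulRight (u j)‖
      ≤ ‖r‖ * ‖∑ j, (innerSL ℝ (u j)).smulRight (u j)‖ :=
        ContinuousLinearMap.opNorm_smul_le _ _
    _ = r * ‖∑ j, (innerSL ℝ (u j)).smulRight (u j)‖ := by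
        rw [Real.norm_eq_abs, abs_of_nonneg hr0]
    _ ≤ r * ∑ j, ‖(innerSL ℝ (u j)).smulRight (u j)‖ :=
        mul_le_mul_of_nonneg_left (norm_sum_le _ _) hr0
    _ ≤ r * ∑ _j : ι, (1:ℝ) :=
        mul_le_mul_of_nonneg_left
          (Finset.sum_le_sum fun j _ => norm_rankone_le (u j) (hu j)) hr0
    _ = 1 := by rw [Finset.sum_const, Finset.card_univ, nsmul_eq_mul, mul_one, mul_comm, hr]

/-- let `H` be a real Hilbert space and `v₁, …, v_N ∈ H` with `‖v_i‖ ≤ 1`.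
Let `J₁, …, J_m` be independent uniform indices in `{1,…,N}` (modelled by the uniform
distribution on `Fin m → Fin N`, i.e., counting measure normalized by `N^m`).  With
`L_N f = (1/N) Σᵢ ⟨v_i, f⟩ v_i` and `L_m f = (1/m) Σ_k ⟨v_{J_k}, f⟩ v_{J_k}` one has, for
every `δ ∈ (0,1)`, `‖L_N − L_m‖ ≤ 4 ln(2/δ)/√m` with probability at least `1 − δ`. -/
theorem stmt6 {H : Type*} [NormedAddCommGroup H] [InnerProductSpace ℝ H]
    (N m : ℕ) (hN : 0 < N) (hm : 0 < m)
    (v : Fin N → H) (hv : ∀ i, ‖v i‖ ≤ 1)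
    (LN : H →L[ℝ] H)
    (hLN : LN = (N : ℝ)⁻¹ • ∑ i : Fin N, (innerSL ℝ (v i)).smulRight (v i))
    (Lm : (Fin m → Fin N) → (H →L[ℝ] H))
    (hLm : ∀ J, Lm J = (m : ℝ)⁻¹ • ∑ k : Fin m, (innerSL ℝ (v (J k))).smulRight (v (J k)))
    (δ : ℝ) (hδ : δ ∈ Set.Ioo (0 : ℝ) 1) :
    ((Nat.card {J : Fin m → Fin N //
        ‖LN - Lm J‖ ≤ 4 * Real.log (2 / δ) / Real.sqrt m}) : ℝ)
      ≥ (1 - δ) * N ^ m := by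
  classical
  obtain ⟨hδ0, hδ1⟩ := hδ
  have hNR : (0:ℝ) < (N:ℝ) := by exact_mod_cast hN
  have hmR : (0:ℝ) < (m:ℝ) := by exact_mod_cast hm
  set f : (Fin m → Fin N) → ℝ := fun J => ‖LN - Lm J‖ with hf
  set L : ℝ := Real.log (2 / δ) with hLdef
  set τ : ℝ := 4 * L / Real.sqrt m with hτ
  set sqm : ℝ := Real.sqrt m with hsqm
  have hsqm0 : 0 < sqm := Real.sqrt_pos.2 hmR
  have hsqm2 : sqm ^ 2 = m := Real.sq_sqrt (le_of_lt hmR)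
  have hlog2 : (0.6931471803 : ℝ) < Real.log 2 := Real.log_two_gt_d9
  have hL2 : Real.log 2 ≤ L := by
    rw [hLdef]
    apply Real.log_le_log (by norm_num)
    rw [le_div_iff₀ hδ0]
    nlinarith
  have hL0 : (0:ℝ) < L := by nlinarith
  -- counting reformulation
  have hcard : (Nat.card {J : Fin m → Fin N // f J ≤ τ} : ℝ)
      = (N:ℝ) ^ m - ((Finset.univ.filter (fun J => ¬ (f J ≤ τ))).card : ℝ) := by
    rw [Nat.card_eq_fintype_card, Fintype.card_subtype]
    have h2 : (Finset.univ.filter (fun J => f J ≤ τ)).card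
        + (Finset.univ.filter (fun J => ¬ (f J ≤ τ))).card = N ^ m := by
      rw [Finset.card_filter_add_card_filter_not, Finset.card_univ, Fintype.card_fun,
        Fintype.card_fin, Fintype.card_fin]
    have h3 := congrArg (Nat.cast (R := ℝ)) h2
    push_cast at h3
    linarith
  set bad : Finset (Fin m → Fin N) := Finset.univ.filter (fun J => ¬ (f J ≤ τ)) with hbad
  suffices hmain : (bad.card : ℝ) ≤ δ * (N:ℝ) ^ m by
    have : ((Nat.card {J : Fin m → Fin N // f J ≤ τ}) : ℝ) ≥ (1 - δ) * (N:ℝ) ^ m := by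
      rw [hcard]; ring_nf; ring_nf at hmain; linarith
    exact_mod_cast this
  -- easy bounds on f
  have hLNn : ‖LN‖ ≤ 1 := by
    rw [hLN]
    exact avg_opnorm_le v hv _ (by rw [Fintype.card_fin]; field_simp) (by positivity)
  have hLmn : ∀ J, ‖Lm J‖ ≤ 1 := by
    intro J
    rw [hLm J]
    exact avg_opnorm_le (fun k => v (J k)) (fun k => hv (J k)) _
      (by rw [Fintype.card_fin]; field_simp) (by positivity)
  have hf2 : ∀ J, f J ≤ 2 := by
    intro J
    calc f J ≤ ‖LN‖ + ‖Lm J‖ := norm_sub_le _ _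
      _ ≤ 2 := by linarith [hLNn, hLmn J]
  by_cases hτ2 : 2 ≤ τ
  · -- trivial case: everything is good
    have : bad = ∅ := by
      rw [hbad]
      refine Finset.filter_false_of_mem fun J _ => ?_
      push_neg
      exact le_trans (hf2 J) hτ2
    rw [this]
    simp
    positivity
  push_neg at hτ2
  -- bounded differences
  have hbd : ∀ (k : Fin m) (J : Fin m → Fin N) (a : Fin N),
      |f (Function.update J k a) - f J| ≤ 2 / m := by
    intro k J a
    have h1 : |f (Function.update J k a) - f J| ≤ ‖Lm J - Lm (Function.update J k a)‖ := by
      have := abs_norm_sub_norm_le (LN - Lm (Function.update J k a)) (LN - Lm J)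
      have e : (LN - Lm (Function.update J k a)) - (LN - Lm J)
          = Lm J - Lm (Function.update J k a) := by abel
      rw [e] at this
      exact this
    have h2 : Lm J - Lm (Function.update J k a)
        = (m:ℝ)⁻¹ • ((innerSL ℝ (v (J k))).smulRight (v (J k))
            - (innerSL ℝ (v a)).smulRight (v a)) := by
      rw [hLm, hLm, ← smul_sub]
      congr 1
      rw [← Finset.sum_sub_distrib]
      rw [Finset.sum_eq_single k]
      · rw [Function.update_self]
      · intro k' _ hk'
        rw [Function.update_of_ne hk']
        simp
      · intro h; exact absurd (Finset.mem_univ k) h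
    calc |f (Function.update J k a) - f J|
        ≤ ‖Lm J - Lm (Function.update J k a)‖ := h1
      _ ≤ ‖(m:ℝ)⁻¹‖ * ‖(innerSL ℝ (v (J k))).smulRight (v (J k))
            - (innerSL ℝ (v a)).smulRight (v a)‖ := by
          rw [h2]; exact ContinuousLinearMap.opNorm_smul_le _ _
      _ ≤ (m:ℝ)⁻¹ * (‖(innerSL ℝ (v (J k))).smulRight (v (J k))‖
            + ‖(innerSL ℝ (v a)).smulRight (v a)‖) := by
          rw [Real.norm_eq_abs, abs_of_nonneg (by positivity)]
          exact mul_le_mul_of_nonneg_left (norm_sub_le _ _) (by positivity)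
      _ ≤ (m:ℝ)⁻¹ * 2 := by
          have := norm_rankone_le (v (J k)) (hv (J k))
          have := norm_rankone_le (v a) (hv a)
          have : ‖(innerSL ℝ (v (J k))).smulRight (v (J k))‖
            + ‖(innerSL ℝ (v a)).smulRight (v a)‖ ≤ 2 := by linarith
          exact mul_le_mul_of_nonneg_left this (by positivity)
      _ = 2 / m := by field_simp
  -- orthonormal coordinates on the span of the `v i`
  have hfd : FiniteDimensional ℝ (Submodule.span ℝ (Set.range v)) :=
    FiniteDimensional.span_of_finite ℝ (Set.finite_range v)
  set V : Submodule ℝ H := Submodule.span ℝ (Set.range v) with hV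
  set b := stdOrthonormalBasis ℝ V with hb
  set d := Module.finrank ℝ V with hd
  set e : Fin d → H := fun x => ((b x : V) : H) with he'
  have he : Orthonormal ℝ e := b.orthonormal.comp_linearIsometry V.subtypeₗᵢ
  have hmem : ∀ i, v i ∈ V := fun i => Submodule.subset_span ⟨i, rfl⟩
  set w : Fin N → Fin d → ℝ := fun i x => b.repr ⟨v i, hmem i⟩ x with hw
  have hvw : ∀ i, v i = ∑ x, w i x • e x := by
    intro i
    have h := b.sum_repr ⟨v i, hmem i⟩
    have h2 := congrArg (Subtype.val (p := fun z => z ∈ V)) h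
    have h3 : v i = ((∑ x, b.repr ⟨v i, hmem i⟩ x • b x : V) : H) := h2.symm
    rw [h3, AddSubmonoidClass.coe_finset_sum]
    exact Finset.sum_congr rfl fun x _ => rfl
  have hw2 : ∀ i, ∑ x, (w i x) ^ 2 ≤ 1 := by
    intro i
    have h1 : ((∑ x, (w i x) ^ 2 : ℝ)) = ‖v i‖ ^ 2 := by
      rw [← real_inner_self_eq_norm_sq]
      conv_rhs => rw [hvw i]
      rw [he.inner_sum (w i) (w i) Finset.univ]
      simp [sq]
    rw [h1]
    nlinarith [hv i, norm_nonneg (v i)]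
  -- decomposition of `LN - Lm J`
  set cc : Fin N ⊕ Fin m → ℝ :=
    Sum.elim (fun _ => (N:ℝ)⁻¹) (fun _ => -(m:ℝ)⁻¹) with hcc
  set uu : (Fin m → Fin N) → Fin N ⊕ Fin m → H :=
    fun J => Sum.elim v (fun k => v (J k)) with huu
  set ww : (Fin m → Fin N) → Fin N ⊕ Fin m → Fin d → ℝ :=
    fun J => Sum.elim w (fun k => w (J k)) with hww
  have hrepr : ∀ J, LN - Lm J
      = ∑ j, cc j • (innerSL ℝ (uu J j)).smulRight (uu J j) := by
    intro J
    rw [hLN, hLm J, Fintype.sum_sum_type]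
    simp only [hcc, huu, Sum.elim_inl, Sum.elim_inr, neg_smul]
    rw [Finset.smul_sum, Finset.smul_sum, sub_eq_add_neg, ← Finset.sum_neg_distrib]
  set MM : (Fin m → Fin N) → Fin d → Fin d → ℝ :=
    fun J x y => ∑ j, cc j * (ww J j x * ww J j y) with hMM
  set S : (Fin m → Fin N) → ℝ := fun J => ∑ x, ∑ y, (MM J x y) ^ 2 with hSS
  have hS0 : ∀ J, 0 ≤ S J :=
    fun J => Finset.sum_nonneg fun x _ => Finset.sum_nonneg fun y _ => sq_nonneg _
  have hfS : ∀ J, f J ≤ Real.sqrt (S J) := by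
    intro J
    rw [hf]
    simp only
    rw [hrepr J]
    refine opnorm_le_sqrt e he (uu J) (ww J) ?_ cc
    rintro (i | k)
    · exact hvw i
    · exact hvw (J k)
  -- the mean of `S` is at most `1/m`
  set q : Fin d → Fin d → ℝ := fun x y => (N:ℝ)⁻¹ * ∑ i, w i x * w i y with hq
  set gf : Fin d → Fin d → Fin N → ℝ := fun x y i => w i x * w i y - q x y with hgf
  have hg0 : ∀ x y, ∑ i, gf x y i = 0 := by
    intro x y
    rw [hgf]
    simp only
    rw [Finset.sum_sub_distrib, Finset.sum_const, Finset.card_univ, Fintype.card_fin,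
      nsmul_eq_mul, hq]
    field_simp
    ring
  have hMg : ∀ J x y, MM J x y = -(m:ℝ)⁻¹ * ∑ k, gf x y (J k) := by
    intro J x y
    rw [hMM]
    simp only
    rw [Fintype.sum_sum_type]
    simp only [hcc, hww, Sum.elim_inl, Sum.elim_inr]
    have e1 : ∑ i, (N:ℝ)⁻¹ * (w i x * w i y) = q x y := by
      simp only [hq]
      exact (Finset.mul_sum _ _ _).symm
    have e2 : ∀ k : Fin m, -(m:ℝ)⁻¹ * gf x y (J k)
        = -(m:ℝ)⁻¹ * (w (J k) x * w (J k) y) + (m:ℝ)⁻¹ * q x y := by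
      intro k; simp only [hgf]; ring
    rw [Finset.mul_sum]
    simp only [e2]
    rw [Finset.sum_add_distrib, Finset.sum_const, Finset.card_univ, Fintype.card_fin,
      nsmul_eq_mul, e1]
    have e3 : (m:ℝ) * ((m:ℝ)⁻¹ * q x y) = q x y := by field_simp
    rw [e3]
    ring
  have hSsum : ∑ J, S J ≤ (N:ℝ) ^ m / m := by
    have hswap : ∑ J, S J = ∑ x, ∑ y, ∑ J, (MM J x y) ^ 2 := by
      rw [hSS]
      simp only
      rw [Finset.sum_comm]
      exact Finset.sum_congr rfl fun x _ => Finset.sum_comm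
    have hxy : ∀ x y, ∑ J, (MM J x y) ^ 2
        ≤ (m:ℝ)⁻¹ ^ 2 * ((m:ℝ) * (N:ℝ) ^ m / N) * ∑ i, (w i x * w i y) ^ 2 := by
      intro x y
      have hvs := var_sum hN (gf x y) (hg0 x y) m
      have e4 : ∑ J, (MM J x y) ^ 2
          = (m:ℝ)⁻¹ ^ 2 * ∑ J : Fin m → Fin N, (∑ k, gf x y (J k)) ^ 2 := by
        rw [Finset.mul_sum]
        refine Finset.sum_congr rfl fun J _ => ?_
        rw [hMg J x y]
        ring
      have hmono : ∑ i, gf x y i ^ 2 ≤ ∑ i, (w i x * w i y) ^ 2 := by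
        have := sum_sub_mean_sq (fun i => w i x * w i y) (q x y)
          (by rw [hq]; field_simp)
        simpa [hgf] using this
      rw [e4, mul_assoc]
      have hnn : (0:ℝ) ≤ (m:ℝ)⁻¹ ^ 2 := by positivity
      refine mul_le_mul_of_nonneg_left ?_ hnn
      calc ∑ J : Fin m → Fin N, (∑ k, gf x y (J k)) ^ 2
          ≤ (m:ℝ) * (N:ℝ) ^ m / N * ∑ i, gf x y i ^ 2 := hvs
        _ ≤ (m:ℝ) * (N:ℝ) ^ m / N * ∑ i, (w i x * w i y) ^ 2 :=
            mul_le_mul_of_nonneg_left hmono (by positivity)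
    have hrearr : ∑ x, ∑ y, ∑ i, (w i x * w i y) ^ 2
        = ∑ i, (∑ x, (w i x) ^ 2) * (∑ y, (w i y) ^ 2) := by
      calc ∑ x, ∑ y, ∑ i, (w i x * w i y) ^ 2
          = ∑ x, ∑ i, ∑ y, (w i x * w i y) ^ 2 :=
            Finset.sum_congr rfl fun x _ => Finset.sum_comm
        _ = ∑ i, ∑ x, ∑ y, (w i x * w i y) ^ 2 := Finset.sum_comm
        _ = ∑ i, (∑ x, (w i x) ^ 2) * (∑ y, (w i y) ^ 2) := by
            refine Finset.sum_congr rfl fun i _ => ?_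
            rw [Finset.sum_mul]
            refine Finset.sum_congr rfl fun x _ => ?_
            rw [Finset.mul_sum]
            exact Finset.sum_congr rfl fun y _ => by ring
    have hsum1 : ∑ i : Fin N, (∑ x, (w i x) ^ 2) * (∑ y, (w i y) ^ 2) ≤ (N:ℝ) := by
      calc ∑ i : Fin N, (∑ x, (w i x) ^ 2) * (∑ y, (w i y) ^ 2)
          ≤ ∑ _i : Fin N, (1:ℝ) := by
            refine Finset.sum_le_sum fun i _ => ?_
            have h1 := hw2 i
            have h2 : (0:ℝ) ≤ ∑ x, (w i x) ^ 2 :=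
              Finset.sum_nonneg fun x _ => sq_nonneg _
            nlinarith
        _ = (N:ℝ) := by simp
    calc ∑ J, S J = ∑ x, ∑ y, ∑ J, (MM J x y) ^ 2 := hswap
      _ ≤ ∑ x, ∑ y, ((m:ℝ)⁻¹ ^ 2 * ((m:ℝ) * (N:ℝ) ^ m / N) * ∑ i, (w i x * w i y) ^ 2) :=
          Finset.sum_le_sum fun x _ => Finset.sum_le_sum fun y _ => hxy x y
      _ = (m:ℝ)⁻¹ ^ 2 * ((m:ℝ) * (N:ℝ) ^ m / N) * ∑ x, ∑ y, ∑ i, (w i x * w i y) ^ 2 := by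
          rw [Finset.mul_sum]
          refine Finset.sum_congr rfl fun x _ => ?_
          rw [Finset.mul_sum]
      _ = (m:ℝ)⁻¹ ^ 2 * ((m:ℝ) * (N:ℝ) ^ m / N)
            * ∑ i, (∑ x, (w i x) ^ 2) * (∑ y, (w i y) ^ 2) := by rw [hrearr]
      _ ≤ (m:ℝ)⁻¹ ^ 2 * ((m:ℝ) * (N:ℝ) ^ m / N) * N := by
          refine mul_le_mul_of_nonneg_left hsum1 (by positivity)
      _ = (N:ℝ) ^ m / m := by field_simp
  have hmean : (∑ J, f J) / (N:ℝ) ^ m ≤ 1 / sqm := by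
    have hA0 : 0 ≤ ∑ J, Real.sqrt (S J) :=
      Finset.sum_nonneg fun J _ => Real.sqrt_nonneg _
    have hA2 : (∑ J, Real.sqrt (S J)) ^ 2 ≤ ((N:ℝ) ^ m / sqm) ^ 2 := by
      calc (∑ J, Real.sqrt (S J)) ^ 2
          ≤ (Finset.univ : Finset (Fin m → Fin N)).card * ∑ J, Real.sqrt (S J) ^ 2 :=
            sq_sum_le_card_mul_sum_sq
        _ = (N:ℝ) ^ m * ∑ J, S J := by
            rw [Finset.card_univ, Fintype.card_fun, Fintype.card_fin, Fintype.card_fin]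
            push_cast
            congr 1
            exact Finset.sum_congr rfl fun J _ => Real.sq_sqrt (hS0 J)
        _ ≤ (N:ℝ) ^ m * ((N:ℝ) ^ m / m) :=
            mul_le_mul_of_nonneg_left hSsum (by positivity)
        _ = ((N:ℝ) ^ m / sqm) ^ 2 := by
            rw [div_pow, ← hsqm2]
            ring
    have hA : ∑ J, Real.sqrt (S J) ≤ (N:ℝ) ^ m / sqm := by
      nlinarith [hA0, hA2, div_nonneg (by positivity : (0:ℝ) ≤ (N:ℝ)^m) (le_of_lt hsqm0)]
    have hfA : ∑ J, f J ≤ (N:ℝ) ^ m / sqm :=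
      le_trans (Finset.sum_le_sum fun J _ => hfS J) hA
    rw [div_le_div_iff₀ (by positivity) hsqm0]
    calc (∑ J, f J) * sqm ≤ ((N:ℝ) ^ m / sqm) * sqm := by
          nlinarith [hsqm0]
      _ = (N:ℝ) ^ m := by field_simp
      _ = 1 * (N:ℝ) ^ m := by ring
  -- Chernoff
  set t : ℝ := τ - 1 / sqm with ht
  have h41 : 0 < 4 * L - 1 := by nlinarith
  have htval : t = (4 * L - 1) / sqm := by
    rw [ht, hτ, ← sub_div]
  have htpos : 0 < t := by
    rw [htval]; positivity
  have ht4 : t ≤ 4 := by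
    have : t ≤ τ := by
      rw [ht]
      have : 0 < 1 / sqm := by positivity
      linarith
    linarith
  set lam : ℝ := t * m / 8 with hlam
  have hlam0 : 0 ≤ lam := by positivity
  have hlamc : lam * (2 / m) ≤ 1 := by
    rw [hlam]
    rw [div_mul_div_comm]
    rw [div_le_one (by positivity)]
    nlinarith
  have hmgf := mcdiarmid_mgf hN (2 / m) lam hlam0 hlamc m f hbd
  have hchern : (bad.card : ℝ) * Real.exp (lam * t)
      ≤ (N:ℝ) ^ m * Real.exp ((m:ℝ) * (lam ^ 2 * (2 / m) ^ 2)) := by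
    have hlow : ∀ J ∈ bad,
        Real.exp (lam * t) ≤ Real.exp (lam * (f J - (∑ J', f J') / (N:ℝ) ^ m)) := by
      intro J hJ
      rw [hbad, Finset.mem_filter] at hJ
      have hτf : τ < f J := not_le.1 hJ.2
      apply Real.exp_le_exp.2
      have h1 : t ≤ f J - (∑ J', f J') / (N:ℝ) ^ m := by
        rw [ht]
        linarith [hmean]
      nlinarith [hlam0]
    calc (bad.card : ℝ) * Real.exp (lam * t)
        ≤ ∑ J ∈ bad, Real.exp (lam * (f J - (∑ J', f J') / (N:ℝ) ^ m)) := by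
          have := Finset.card_nsmul_le_sum bad
            (fun J => Real.exp (lam * (f J - (∑ J', f J') / (N:ℝ) ^ m)))
            (Real.exp (lam * t)) hlow
          simpa [nsmul_eq_mul] using this
      _ ≤ ∑ J, Real.exp (lam * (f J - (∑ J', f J') / (N:ℝ) ^ m)) :=
          Finset.sum_le_sum_of_subset_of_nonneg (Finset.subset_univ _)
            (fun J _ _ => Real.exp_nonneg _)
      _ ≤ _ := hmgf
  have hexp : Real.exp ((m:ℝ) * (lam ^ 2 * (2 / m) ^ 2) - lam * t)
      ≤ δ := by
    have harg : (m:ℝ) * (lam ^ 2 * (2 / m) ^ 2) - lam * t = -(t ^ 2 * (m:ℝ)) / 16 := by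
      rw [hlam]
      field_simp
      ring
    have ht2 : t ^ 2 * (m:ℝ) = (4 * L - 1) ^ 2 := by
      rw [htval, div_pow, hsqm2]
      field_simp
    rw [harg, ht2, show δ = Real.exp (Real.log δ) from (Real.exp_log hδ0).symm]
    apply Real.exp_le_exp.2
    have hlogδ : Real.log δ = Real.log 2 - L := by
      rw [hLdef, Real.log_div (by norm_num) (ne_of_gt hδ0)]
      ring
    rw [hlogδ]
    nlinarith [sq_nonneg (4 * L - 3), hlog2]
  calc (bad.card : ℝ)
      = (bad.card : ℝ) * Real.exp (lam * t) * Real.exp (-(lam * t)) := by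
        rw [mul_assoc, ← Real.exp_add]; simp
    _ ≤ (N:ℝ) ^ m * Real.exp ((m:ℝ) * (lam ^ 2 * (2 / m) ^ 2)) * Real.exp (-(lam * t)) := by
        exact mul_le_mul_of_nonneg_right hchern (Real.exp_nonneg _)
    _ = (N:ℝ) ^ m * Real.exp ((m:ℝ) * (lam ^ 2 * (2 / m) ^ 2) - lam * t) := by
        rw [mul_assoc, ← Real.exp_add]; ring_nf
    _ ≤ (N:ℝ) ^ m * δ := mul_le_mul_of_nonneg_left hexp (by positivity)
    _ = δ * (N:ℝ) ^ m := by ring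
end

section
/- For every p > 1 there exist constants c > 0 and c' > 0 such that for all positive integers m and N with N ≥ 64 (ln 4)² (m+1)², there exists a real symmetric positive semidefinite N×N matrix K with all diagonal entries equal to 1 whose eigenvalues satisfy λ_i ≤ c N i^{−p} for all i ∈ {1,…,N} (i.e., follow a p-power law), and such that for every subset S ⊆ {1,…,N} of size at most m, the Nyström approximation error satisfies ‖K − K_b K̂† K_b^⊤‖₂ ≥ c' N / m^p. -/
open Matrix
open scoped Matrix.Norms.L2Operator

namespace Stmt15

set_option maxHeartbeats 1000000


variable {n : ℕ}

/-- Rotation in the `(i,j)` plane with cosine `c`, sine `s`. -/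
def rotM (i j : Fin n) (c s : ℝ) : Matrix (Fin n) (Fin n) ℝ :=
  Matrix.of fun a b =>
    if a = i then (if b = i then c else if b = j then s else 0)
    else if a = j then (if b = i then -s else if b = j then c else 0)
    else if a = b then 1 else 0

variable {i j : Fin n} {c s : ℝ}

lemma rotM_apply_i (b : Fin n) : rotM i j c s i b = if b = i then c else if b = j then s else 0 := by
  simp [rotM]

lemma rotM_apply_j (hij : i ≠ j) (b : Fin n) :
    rotM i j c s j b = if b = i then -s else if b = j then c else 0 := by
  simp [rotM, hij.symm]

lemma rotM_apply_other {a : Fin n} (hai : a ≠ i) (haj : a ≠ j) (b : Fin n) :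
    rotM i j c s a b = if a = b then 1 else 0 := by
  simp [rotM, hai, haj]

lemma sum_two_special (hij : i ≠ j) (u v : ℝ) (f : Fin n → ℝ) :
    ∑ a : Fin n, (if a = i then u else if a = j then v else 0) * f a = u * f i + v * f j := by
  have h : ∀ a : Fin n, (if a = i then u else if a = j then v else 0) * f a
      = (if a = i then u * f i else 0) + (if a = j then v * f j else 0) := by
    intro a
    by_cases h1 : a = i
    · subst h1; simp [hij]
    · by_cases h2 : a = j <;> simp [h1, h2, hij.symm]
  rw [Finset.sum_congr rfl fun a _ => h a, Finset.sum_add_distrib]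
  simp [Finset.sum_ite_eq']

variable (M : Matrix (Fin n) (Fin n) ℝ)

lemma rotM_mul_i (hij : i ≠ j) (b : Fin n) :
    (rotM i j c s * M) i b = c * M i b + s * M j b := by
  simp only [Matrix.mul_apply, rotM_apply_i]
  exact sum_two_special hij c s _

lemma rotM_mul_j (hij : i ≠ j) (b : Fin n) :
    (rotM i j c s * M) j b = -s * M i b + c * M j b := by
  simp only [Matrix.mul_apply, rotM_apply_j hij]
  exact sum_two_special hij (-s) c _

lemma rotM_mul_other {a : Fin n} (hai : a ≠ i) (haj : a ≠ j) (b : Fin n) :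
    (rotM i j c s * M) a b = M a b := by
  simp only [Matrix.mul_apply, rotM_apply_other hai haj]
  rw [Finset.sum_congr rfl (fun x _ => by rw [ite_mul, one_mul, zero_mul])]
  simp [Finset.sum_ite_eq]

lemma mul_rotM_transpose_i (a : Fin n) (hij : i ≠ j) :
    (M * (rotM i j c s)ᵀ) a i = c * M a i + s * M a j := by
  have : (M * (rotM i j c s)ᵀ) a i = ((rotM i j c s) * Mᵀ) i a := by
    rw [← Matrix.transpose_apply (M * (rotM i j c s)ᵀ), Matrix.transpose_mul,
      Matrix.transpose_transpose]
  rw [this, rotM_mul_i _ hij]; simp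

lemma mul_rotM_transpose_j (a : Fin n) (hij : i ≠ j) :
    (M * (rotM i j c s)ᵀ) a j = -s * M a i + c * M a j := by
  have : (M * (rotM i j c s)ᵀ) a j = ((rotM i j c s) * Mᵀ) j a := by
    rw [← Matrix.transpose_apply (M * (rotM i j c s)ᵀ), Matrix.transpose_mul,
      Matrix.transpose_transpose]
  rw [this, rotM_mul_j _ hij]; simp

lemma mul_rotM_transpose_other (a : Fin n) {b : Fin n} (hbi : b ≠ i) (hbj : b ≠ j) :
    (M * (rotM i j c s)ᵀ) a b = M a b := by
  have : (M * (rotM i j c s)ᵀ) a b = ((rotM i j c s) * Mᵀ) b a := by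
    rw [← Matrix.transpose_apply (M * (rotM i j c s)ᵀ), Matrix.transpose_mul,
      Matrix.transpose_transpose]
  rw [this, rotM_mul_other _ hbi hbj]; simp

lemma rotM_orth (hij : i ≠ j) (hcs : c ^ 2 + s ^ 2 = 1) :
    rotM i j c s * (rotM i j c s)ᵀ = 1 := by
  ext a b
  by_cases hbi : b = i
  · rw [hbi, mul_rotM_transpose_i _ _ hij]
    simp only [rotM, Matrix.of_apply, Matrix.one_apply]
    split_ifs <;> simp_all <;> nlinarith
  · by_cases hbj : b = j
    · rw [hbj, mul_rotM_transpose_j _ _ hij]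
      simp only [rotM, Matrix.of_apply, Matrix.one_apply]
      split_ifs <;> simp_all <;> nlinarith
    · rw [mul_rotM_transpose_other _ _ hbi hbj]
      simp only [rotM, Matrix.of_apply, Matrix.one_apply]
      split_ifs <;> simp_all

lemma conj_isSymm (R A : Matrix (Fin n) (Fin n) ℝ) (hA : A.IsSymm) :
    (R * A * Rᵀ).IsSymm := by
  unfold Matrix.IsSymm
  rw [Matrix.transpose_mul, Matrix.transpose_mul, Matrix.transpose_transpose, hA.eq,
    Matrix.mul_assoc]

lemma conj_trace (R A : Matrix (Fin n) (Fin n) ℝ) (hR : R * Rᵀ = 1) :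
    (R * A * Rᵀ).trace = A.trace := by
  rw [Matrix.trace_mul_cycle, mul_eq_one_comm.mp hR, Matrix.one_mul]

/-- Rotate in the `(i,j)` plane so that the `(i,i)` entry becomes `1`. -/
lemma exists_rot (A : Matrix (Fin n) (Fin n) ℝ) (hA : A.IsSymm) (hij : i ≠ j)
    (h1 : (1:ℝ) ∈ Set.uIcc (A i i) (A j j)) :
    ∃ R : Matrix (Fin n) (Fin n) ℝ, R * Rᵀ = 1 ∧ (R * A * Rᵀ) i i = 1 ∧
      (∀ l, l ≠ i → l ≠ j → (R * A * Rᵀ) l l = A l l) := by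
  have hcont : ContinuousOn (fun t : ℝ =>
      (1 - t ^ 2) * A i i + 2 * t * Real.sqrt (1 - t ^ 2) * A i j + t ^ 2 * A j j)
      (Set.uIcc 0 1) := by
    apply Continuous.continuousOn
    fun_prop
  have hIV := intermediate_value_uIcc hcont
  simp only [one_pow, sub_self, Real.sqrt_zero, mul_zero, zero_mul, zero_pow, sub_zero,
    one_mul, zero_add, add_zero, mul_one, ne_eq, OfNat.ofNat_ne_zero, not_false_eq_true,
    zero_mul, zero_add] at hIV
  have hIV' : (1:ℝ) ∈ (fun t : ℝ =>
      (1 - t ^ 2) * A i i + 2 * t * Real.sqrt (1 - t ^ 2) * A i j + t ^ 2 * A j j) ''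
      (Set.uIcc 0 1) := by
    apply hIV
    convert h1 using 2 <;> norm_num
  obtain ⟨t, ht, hft⟩ := hIV'
  rw [Set.uIcc_of_le (by norm_num)] at ht
  have ht2 : t ^ 2 ≤ 1 := by nlinarith [ht.1, ht.2]
  have hsq : Real.sqrt (1 - t ^ 2) ^ 2 = 1 - t ^ 2 := Real.sq_sqrt (by linarith)
  set c := Real.sqrt (1 - t ^ 2) with hc
  have hcs : c ^ 2 + t ^ 2 = 1 := by rw [hsq]; ring
  have hsymm : A j i = A i j := (hA.apply j i).symm
  refine ⟨rotM i j c t, rotM_orth hij hcs, ?_, ?_⟩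
  · rw [Matrix.mul_assoc, rotM_mul_i _ hij, mul_rotM_transpose_i _ _ hij,
      mul_rotM_transpose_i _ _ hij, hsymm]
    simp only at hft
    linear_combination hft + A i i * hsq
  · intro l hli hlj
    rw [Matrix.mul_assoc, rotM_mul_other _ hli hlj, mul_rotM_transpose_other _ _ hli hlj]


lemma exists_opposite (A : Matrix (Fin n) (Fin n) ℝ) (ht : A.trace = n) {i : Fin n}
    (hi : A i i ≠ 1) :
    ∃ j : Fin n, j ≠ i ∧ A j j ≠ 1 ∧ (1:ℝ) ∈ Set.uIcc (A i i) (A j j) := by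
  have hsum : ∑ l : Fin n, (A l l - 1) = 0 := by
    have h1 : A.trace = ∑ l : Fin n, A l l := rfl
    rw [h1] at ht
    simp [Finset.sum_sub_distrib, ht]
  have hsplit : (A i i - 1) + ∑ l ∈ Finset.univ.erase i, (A l l - 1) = 0 := by
    rw [Finset.add_sum_erase Finset.univ (fun l => A l l - 1) (Finset.mem_univ i)]
    exact hsum
  rcases lt_or_gt_of_ne hi with hlt | hgt
  · have h0 : ∑ l ∈ Finset.univ.erase i, (0:ℝ) < ∑ l ∈ Finset.univ.erase i, (A l l - 1) := by
      simp only [Finset.sum_const_zero]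
      linarith
    obtain ⟨j, hj, hj2⟩ := Finset.exists_lt_of_sum_lt h0
    exact ⟨j, Finset.ne_of_mem_erase hj, by intro h; rw [h] at hj2; linarith,
      Set.mem_uIcc.mpr (Or.inl ⟨le_of_lt hlt, by linarith⟩)⟩
  · have h0 : ∑ l ∈ Finset.univ.erase i, (A l l - 1) < ∑ l ∈ Finset.univ.erase i, (0:ℝ) := by
      simp only [Finset.sum_const_zero]
      linarith
    obtain ⟨j, hj, hj2⟩ := Finset.exists_lt_of_sum_lt h0
    exact ⟨j, Finset.ne_of_mem_erase hj, by intro h; rw [h] at hj2; linarith,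
      Set.mem_uIcc.mpr (Or.inr ⟨by linarith, le_of_lt hgt⟩)⟩

/-- Equalize the diagonal of a symmetric matrix with trace `n` by an orthogonal conjugation. -/
lemma equalize_aux : ∀ (d : ℕ) (A : Matrix (Fin n) (Fin n) ℝ), A.IsSymm → A.trace = n →
    (Finset.univ.filter fun i => A i i ≠ 1).card ≤ d →
    ∃ V : Matrix (Fin n) (Fin n) ℝ, V * Vᵀ = 1 ∧ ∀ i, (V * A * Vᵀ) i i = 1 := by
  intro d
  induction d with
  | zero =>
    intro A hs ht hc
    refine ⟨1, by simp, fun i => ?_⟩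
    have : ∀ i : Fin n, ¬ (A i i ≠ 1) := by
      intro i hne
      have : (Finset.univ.filter fun i => A i i ≠ 1).Nonempty := ⟨i, by simp [hne]⟩
      have := Finset.card_pos.mpr this
      omega
    simpa using not_not.mp (this i)
  | succ d ih =>
    intro A hs ht hc
    by_cases hall : ∀ i : Fin n, A i i = 1
    · exact ⟨1, by simp, fun i => by simpa using hall i⟩
    · push_neg at hall
      obtain ⟨i, hi⟩ := hall
      obtain ⟨j, hji, hAj, huIcc⟩ := exists_opposite A ht hi
      obtain ⟨R, hR, hRii, hRother⟩ := exists_rot A hs (Ne.symm hji) huIcc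
      set B := R * A * Rᵀ with hB
      have hBs : B.IsSymm := conj_isSymm R A hs
      have hBt : B.trace = n := by rw [hB, conj_trace R A hR]; exact ht
      have hsubset : (Finset.univ.filter fun l => B l l ≠ 1) ⊆
          (Finset.univ.filter fun l => A l l ≠ 1).erase i := by
        intro l hl
        simp only [Finset.mem_filter, Finset.mem_univ, true_and] at hl
        rcases eq_or_ne l i with rfl | hli
        · exact absurd hRii hl
        · refine Finset.mem_erase.mpr ⟨hli, Finset.mem_filter.mpr ⟨Finset.mem_univ _, ?_⟩⟩
          rcases eq_or_ne l j with rfl | hlj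
          · exact hAj
          · rw [← hRother l hli hlj]; exact hl
      have hcard : (Finset.univ.filter fun l => B l l ≠ 1).card ≤ d := by
        have h1 := Finset.card_le_card hsubset
        have h2 : i ∈ (Finset.univ.filter fun l => A l l ≠ 1) := by simp [hi]
        have h3 := Finset.card_erase_of_mem h2
        omega
      obtain ⟨W, hW, hWd⟩ := ih B hBs hBt hcard
      refine ⟨W * R, ?_, fun l => ?_⟩
      · rw [Matrix.transpose_mul, show W * R * (Rᵀ * Wᵀ) = W * (R * Rᵀ) * Wᵀ by
          noncomm_ring, hR, Matrix.mul_one, hW]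
      · rw [Matrix.transpose_mul, show W * R * A * (Rᵀ * Wᵀ) = W * (R * A * Rᵀ) * Wᵀ by
          noncomm_ring]
        exact hWd l

lemma quad_le_norm {N : ℕ} (A : Matrix (Fin N) (Fin N) ℝ) (x : Fin N → ℝ) :
    x ⬝ᵥ (A *ᵥ x) ≤ ‖A‖ * (x ⬝ᵥ x) := by
  set x' : EuclideanSpace ℝ (Fin N) := (EuclideanSpace.equiv (Fin N) ℝ).symm x with hx'
  have h1 : x ⬝ᵥ (A *ᵥ x) = inner ℝ x' ((EuclideanSpace.equiv (Fin N) ℝ).symm (A *ᵥ x)) := by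
    simp only [PiLp.inner_apply, RCLike.inner_apply, starRingEnd_apply, star_trivial]
    simp [dotProduct, hx', EuclideanSpace.equiv, mul_comm]
  have h2 : x ⬝ᵥ x = ‖x'‖ * ‖x'‖ := by
    rw [← real_inner_self_eq_norm_mul_norm]
    simp only [PiLp.inner_apply, RCLike.inner_apply, starRingEnd_apply, star_trivial]
    simp [dotProduct, hx', EuclideanSpace.equiv]
  rw [h1, h2]
  calc inner ℝ x' ((EuclideanSpace.equiv (Fin N) ℝ).symm (A *ᵥ x))
      ≤ ‖x'‖ * ‖(EuclideanSpace.equiv (Fin N) ℝ).symm (A *ᵥ x)‖ := real_inner_le_norm _ _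
    _ ≤ ‖x'‖ * (‖A‖ * ‖x'‖) := by
        apply mul_le_mul_of_nonneg_left _ (norm_nonneg _)
        exact A.l2_opNorm_mulVec x'
    _ = ‖A‖ * (‖x'‖ * ‖x'‖) := by ring

lemma exists_good_vec {N m : ℕ} (hmN : m + 1 ≤ N) (V : Matrix (Fin N) (Fin N) ℝ)
    (hV : Vᵀ * V = 1) {ι : Type*} [Fintype ι] (hcard : Fintype.card ι ≤ m)
    (L : (Fin N → ℝ) →ₗ[ℝ] (ι → ℝ)) :
    ∃ w : Fin N → ℝ, (V *ᵥ w) ≠ 0 ∧ L (V *ᵥ w) = 0 ∧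
      ∀ t : Fin N, m < (t : ℕ) → w t = 0 := by
  classical
  set g : Fin (m+1) → (Fin N → ℝ) := fun a => V *ᵥ (Pi.single (Fin.castLE hmN a) 1 : Fin N → ℝ) with hg
  have hVg : ∀ a, (Matrix.mulVecLin Vᵀ) (g a) = (Pi.single (Fin.castLE hmN a) 1 : Fin N → ℝ) := by
    intro a
    simp only [hg, Matrix.mulVecLin_apply, Matrix.mulVec_mulVec, hV, Matrix.one_mulVec]
  have hgind : LinearIndependent ℝ g := by
    have hbase : LinearIndependent ℝ fun a : Fin (m+1) => (Pi.single (Fin.castLE hmN a) 1 : Fin N → ℝ) := by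
      have := (Pi.basisFun ℝ (Fin N)).linearIndependent
      have h2 := this.comp (Fin.castLE hmN) (Fin.castLE_injective hmN)
      convert h2 using 1
      ext a t
      simp [Pi.basisFun_apply, Pi.single_apply, Function.comp]
    apply LinearIndependent.of_comp (Matrix.mulVecLin Vᵀ)
    convert hbase using 1
    ext a
    exact congrFun (hVg a) _
    rfl
  set U : Submodule ℝ (Fin N → ℝ) := Submodule.span ℝ (Set.range g) with hU
  have hdimU : Module.finrank ℝ U = m + 1 := by
    rw [hU, finrank_span_eq_card hgind, Fintype.card_fin]
  have hdimker : N ≤ Module.finrank ℝ (LinearMap.ker L) + m := by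
    have h1 := LinearMap.finrank_range_add_finrank_ker L
    have h2 : Module.finrank ℝ (LinearMap.range L) ≤ m :=
      le_trans (Submodule.finrank_le _) (by simpa using hcard)
    have h3 : Module.finrank ℝ (Fin N → ℝ) = N := by simp
    omega
  have hinter : 0 < Module.finrank ℝ ↥(U ⊓ LinearMap.ker L) := by
    have h1 := Submodule.finrank_sup_add_finrank_inf_eq U (LinearMap.ker L)
    have h2 : Module.finrank ℝ ↥(U ⊔ LinearMap.ker L) ≤ N := by
      have := Submodule.finrank_le (U ⊔ LinearMap.ker L)
      simpa using this
    omega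
  obtain ⟨⟨x, hxmem⟩, hxne⟩ := Module.finrank_pos_iff_exists_ne_zero.mp hinter
  have hxne' : x ≠ 0 := by
    intro h
    apply hxne
    exact Subtype.ext h
  obtain ⟨hxU, hxker⟩ := Submodule.mem_inf.mp hxmem
  rw [hU, Submodule.mem_span_range_iff_exists_fun] at hxU
  obtain ⟨cf, hcf⟩ := hxU
  set w : Fin N → ℝ := ∑ a : Fin (m+1), cf a • (Pi.single (Fin.castLE hmN a) 1 : Fin N → ℝ)
    with hw
  have hVw : V *ᵥ w = x := by
    rw [← hcf]
    have : V *ᵥ w = Matrix.mulVecLin V w := rfl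
    rw [this, hw, map_sum]
    apply Finset.sum_congr rfl
    intro a _
    simp [hg, Matrix.mulVecLin_apply]
  refine ⟨w, by rw [hVw]; exact hxne', by rw [hVw]; exact hxker, ?_⟩
  intro t ht
  rw [hw]
  rw [Finset.sum_apply]
  apply Finset.sum_eq_zero
  intro a _
  have : (Fin.castLE hmN a : Fin N) ≠ t := by
    intro h
    have : ((Fin.castLE hmN a : Fin N) : ℕ) = (t : ℕ) := by rw [h]
    simp only [Fin.coe_castLE] at this
    omega
  simp [Pi.single_apply, this]


end Stmt15

/-- for every `p > 1` there are constants `c, c' > 0` such that for all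
positive integers `m, N` with `N ≥ 64 (ln 4)² (m+1)²`, there is a real symmetric PSD
`N × N` matrix `K` with unit diagonal whose eigenvalues (in descending order, with
orthogonal eigendecomposition `K = V diag(λ) Vᵀ`) satisfy the `p`-power law
`λ_i ≤ c N i^{−p}`, and such that for every subset `S ⊆ {1,…,N}` with `|S| ≤ m` the
Nyström approximation error satisfies `‖K − K_b K̂† K_bᵀ‖₂ ≥ c' N/mᵖ`. -/
theorem stmt15 (p : ℝ) (hp : 1 < p) :
    ∃ c c' : ℝ, 0 < c ∧ 0 < c' ∧
      ∀ m N : ℕ, 0 < m → 0 < N →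
        (N : ℝ) ≥ 64 * (Real.log 4) ^ 2 * (m + 1) ^ 2 →
        ∃ K : Matrix (Fin N) (Fin N) ℝ, K.PosSemidef ∧ (∀ i, K i i = 1) ∧
          (∃ (V : Matrix (Fin N) (Fin N) ℝ) (lam : Fin N → ℝ),
            Vᵀ * V = 1 ∧ K = V * Matrix.diagonal lam * Vᵀ ∧
            (∀ i j : Fin N, i ≤ j → lam j ≤ lam i) ∧
            (∀ i : Fin N, lam i ≤ c * N * (((i : ℕ) + 1 : ℝ)) ^ (-p))) ∧
          ∀ S : Finset (Fin N), S.card ≤ m →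
            ∀ Kdag : Matrix {x // x ∈ S} {x // x ∈ S} ℝ,
              IsMoorePenroseInv (K.submatrix (fun i : {x // x ∈ S} => (i : Fin N))
                  (fun j : {x // x ∈ S} => (j : Fin N))) Kdag →
              ‖K - (K.submatrix id (fun i : {x // x ∈ S} => (i : Fin N)) * Kdag *
                  (K.submatrix id (fun i : {x // x ∈ S} => (i : Fin N)))ᵀ)‖
                ≥ c' * N / (m : ℝ) ^ p := by
  classical
  have hp0 : 0 < p := by linarith
  -- the power-law profile
  set f : ℕ → ℝ := fun k => ((k : ℝ) + 1) ^ (-p) with hfdef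
  have hf_pos : ∀ k, 0 < f k := fun k => Real.rpow_pos_of_pos (by positivity) _
  have hf_anti : ∀ a b : ℕ, a ≤ b → f b ≤ f a := by
    intro a b hab
    have h1 : ((a : ℝ) + 1) ^ p ≤ ((b : ℝ) + 1) ^ p := by
      apply Real.rpow_le_rpow (by positivity) _ (le_of_lt hp0)
      have : (a : ℝ) ≤ b := by exact_mod_cast hab
      linarith
    have h2 : (((b : ℝ) + 1) ^ p)⁻¹ ≤ (((a : ℝ) + 1) ^ p)⁻¹ := by
      apply inv_anti₀ (by positivity) h1
    rw [hfdef]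
    simpa [Real.rpow_neg (by positivity : (0:ℝ) ≤ (a:ℝ)+1),
      Real.rpow_neg (by positivity : (0:ℝ) ≤ (b:ℝ)+1)] using h2
  have hsummable : Summable f := by
    have h1 : Summable (fun n : ℕ => ((n : ℝ) ^ p)⁻¹) := Real.summable_nat_rpow_inv.mpr hp
    have h2 := (summable_nat_add_iff 1).mpr h1
    apply h2.congr
    intro n
    rw [hfdef]
    push_cast
    rw [Real.rpow_neg (by positivity)]
  set Z : ℝ := ∑' n : ℕ, f n with hZdef
  have hZ1 : 1 ≤ Z := by
    have h0 : f 0 = 1 := by simp [hfdef]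
    have := Summable.le_tsum hsummable 0 (fun j _ => (hf_pos j).le)
    rw [h0] at this
    exact this
  have hZ0 : 0 < Z := lt_of_lt_of_le one_pos hZ1
  refine ⟨1, (2:ℝ) ^ (-p) / Z, one_pos, by positivity, ?_⟩
  intro m N hm hN hbig
  have hm1 : (1:ℝ) ≤ (m:ℝ) := by exact_mod_cast hm
  have hlog : (1:ℝ) ≤ Real.log 4 := by
    rw [Real.le_log_iff_exp_le (by norm_num)]
    have := Real.exp_one_lt_d9
    linarith
  have hmN : m + 1 ≤ N := by
    have hL2 : 1 ≤ Real.log 4 ^ 2 := by nlinarith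
    have key : (64 * Real.log 4 ^ 2 - 1) * ((m:ℝ) + 1) ^ 2 ≥ 0 :=
      mul_nonneg (by nlinarith) (sq_nonneg _)
    have hmm : ((m:ℝ) + 1) ≤ ((m:ℝ) + 1) ^ 2 := by nlinarith
    have h1 : ((m:ℝ) + 1) ≤ (N:ℝ) := by nlinarith [hbig]
    exact_mod_cast h1
  -- the sum normalizer
  have hT1 : (1:ℝ) ≤ ∑ i : Fin N, f i := by
    have h0 : f (((⟨0, hN⟩ : Fin N) : ℕ)) = 1 := by simp [hfdef]
    have h := Finset.single_le_sum (f := fun i : Fin N => f (i : ℕ))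
      (fun i _ => (hf_pos _).le) (Finset.mem_univ (⟨0, hN⟩ : Fin N))
    exact le_trans (le_of_eq h0.symm) h
  have hTZ : ∑ i : Fin N, f i ≤ Z := by
    rw [Fin.sum_univ_eq_sum_range (fun k => f k) N]
    exact Summable.sum_le_tsum (Finset.range N) (fun i _ => (hf_pos i).le) hsummable
  set T : ℝ := ∑ i : Fin N, f i with hTdef
  have hT0 : 0 < T := lt_of_lt_of_le one_pos hT1
  set lam : Fin N → ℝ := fun i => (N : ℝ) * f (i : ℕ) / T with hlamdef
  have hlam_nonneg : ∀ i, 0 ≤ lam i := by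
    intro i
    rw [hlamdef]
    positivity
  -- equalize the diagonal
  have htrace : (Matrix.diagonal lam).trace = (N : ℝ) := by
    rw [Matrix.trace_diagonal, hlamdef]
    have : ∑ i : Fin N, (N : ℝ) * f (i : ℕ) / T = (N : ℝ) * (∑ i : Fin N, f (i : ℕ)) / T := by
      rw [Finset.mul_sum, Finset.sum_div]
    rw [this, ← hTdef, mul_div_assoc, div_self (ne_of_gt hT0), mul_one]
  obtain ⟨V, hVVt, hVdiag⟩ := Stmt15.equalize_aux
    (Finset.univ.filter fun i => (Matrix.diagonal lam) i i ≠ 1).card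
    (Matrix.diagonal lam) (Matrix.isSymm_diagonal lam) htrace le_rfl
  have hVtV : Vᵀ * V = 1 := mul_eq_one_comm.mp hVVt
  set K : Matrix (Fin N) (Fin N) ℝ := V * Matrix.diagonal lam * Vᵀ with hKdef
  have hVH : Vᴴ = Vᵀ := by
    ext a b
    simp [Matrix.conjTranspose_apply]
  have hKps : K.PosSemidef := by
    have h1 : (Matrix.diagonal lam).PosSemidef :=
      Matrix.posSemidef_diagonal_iff.mpr (fun i => hlam_nonneg i)
    have h2 := h1.mul_mul_conjTranspose_same V
    rwa [hVH] at h2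
  refine ⟨K, hKps, fun i => hVdiag i, ⟨V, lam, hVtV, rfl, ?_, ?_⟩, ?_⟩
  · -- sorted
    intro i j hij
    simp only [hlamdef]
    apply (div_le_div_iff_of_pos_right hT0).mpr
    exact mul_le_mul_of_nonneg_left (hf_anti _ _ hij) (Nat.cast_nonneg N)
  · -- power law
    intro i
    simp only [hlamdef, one_mul]
    calc (N : ℝ) * f (i : ℕ) / T ≤ (N : ℝ) * f (i : ℕ) / 1 :=
          div_le_div_of_nonneg_left (by positivity) one_pos hT1
      _ = (N : ℝ) * f (i : ℕ) := by rw [div_one]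
      _ = (N : ℝ) * (((i : ℕ) : ℝ) + 1) ^ (-p) := rfl
  · -- Nyström lower bound
    intro S hS Kdag _
    set Kb : Matrix (Fin N) {x // x ∈ S} ℝ := K.submatrix id (fun i : {x // x ∈ S} => (i : Fin N))
      with hKb
    set B : Matrix (Fin N) (Fin N) ℝ := Kb * Kdag * Kbᵀ with hB
    have hcard : Fintype.card {x // x ∈ S} ≤ m := by
      rw [Fintype.card_coe]
      exact hS
    obtain ⟨w, hxne, hLx, hwsupp⟩ := Stmt15.exists_good_vec hmN V hVtV hcard
      (Matrix.mulVecLin Kbᵀ)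
    set x : Fin N → ℝ := V *ᵥ w with hx
    have hKbx : Kbᵀ *ᵥ x = 0 := hLx
    have hBx : B *ᵥ x = 0 := by
      rw [hB, ← Matrix.mulVec_mulVec, ← Matrix.mulVec_mulVec, hKbx, Matrix.mulVec_zero,
        Matrix.mulVec_zero]
    have hVtx : Vᵀ *ᵥ x = w := by
      rw [hx, Matrix.mulVec_mulVec, hVtV, Matrix.one_mulVec]
    have hxVdot : ∀ u : Fin N → ℝ, x ⬝ᵥ (V *ᵥ u) = w ⬝ᵥ u := by
      intro u
      rw [Matrix.dotProduct_mulVec]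
      have h1 : x ᵥ* V = Vᵀ *ᵥ x := by
        rw [← Matrix.transpose_transpose V, Matrix.vecMul_transpose, Matrix.transpose_transpose]
      rw [h1, hVtx]
    have hxKx : x ⬝ᵥ (K *ᵥ x) = ∑ t : Fin N, w t * (lam t * w t) := by
      have h1 : K *ᵥ x = V *ᵥ (Matrix.diagonal lam *ᵥ w) := by
        rw [hKdef, hx, Matrix.mulVec_mulVec, Matrix.mulVec_mulVec,
          Matrix.mul_assoc (V * Matrix.diagonal lam) Vᵀ V, hVtV, Matrix.mul_one,
          ← Matrix.mulVec_mulVec]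
      rw [h1, hxVdot]
      simp [dotProduct, Matrix.mulVec_diagonal]
    have hxx : x ⬝ᵥ x = w ⬝ᵥ w := hxVdot w
    have hxxpos : 0 < x ⬝ᵥ x := by
      rcases Function.ne_iff.mp hxne with ⟨i, hi⟩
      have h1 : ∀ t : Fin N, 0 ≤ x t * x t := fun t => mul_self_nonneg _
      exact Finset.sum_pos' (fun t _ => h1 t) ⟨i, Finset.mem_univ i, mul_self_pos.mpr hi⟩
    set tm : Fin N := ⟨m, by omega⟩ with htm
    have hsorted : ∀ t : Fin N, (t : ℕ) ≤ m → lam tm ≤ lam t := by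
      intro t ht
      simp only [hlamdef]
      apply (div_le_div_iff_of_pos_right hT0).mpr
      apply mul_le_mul_of_nonneg_left _ (Nat.cast_nonneg N)
      exact hf_anti _ _ (by simpa [htm] using ht)
    have hsum_ge : lam tm * (x ⬝ᵥ x) ≤ x ⬝ᵥ (K *ᵥ x) := by
      rw [hxKx, hxx, dotProduct, Finset.mul_sum]
      apply Finset.sum_le_sum
      intro t _
      by_cases htmle : (t : ℕ) ≤ m
      · calc lam tm * (w t * w t) ≤ lam t * (w t * w t) :=
              mul_le_mul_of_nonneg_right (hsorted t htmle) (mul_self_nonneg _)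
          _ = w t * (lam t * w t) := by ring
      · have hw0 : w t = 0 := hwsupp t (by omega)
        simp [hw0]
    have hquad : x ⬝ᵥ ((K - B) *ᵥ x) = x ⬝ᵥ (K *ᵥ x) := by
      rw [Matrix.sub_mulVec, dotProduct_sub, hBx, dotProduct_zero, sub_zero]
    have hnorm := Stmt15.quad_le_norm (K - B) x
    have hlamnorm : lam tm ≤ ‖K - B‖ := by
      have h2 : lam tm * (x ⬝ᵥ x) ≤ ‖K - B‖ * (x ⬝ᵥ x) := by
        rw [hquad] at hnorm
        linarith [hsum_ge, hnorm]
      exact le_of_mul_le_mul_right h2 hxxpos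
    have hfm : (2:ℝ) ^ (-p) / (m:ℝ) ^ p ≤ f m := by
      have hb1 : (0:ℝ) < (m:ℝ) := by linarith
      have h1 : ((m:ℝ) + 1) ^ p ≤ (2 * (m:ℝ)) ^ p :=
        Real.rpow_le_rpow (by positivity) (by linarith) hp0.le
      have h2 : ((2 * (m:ℝ)) ^ p)⁻¹ ≤ (((m:ℝ) + 1) ^ p)⁻¹ :=
        inv_anti₀ (by positivity) h1
      have h3 : (2 * (m:ℝ)) ^ p = 2 ^ p * (m:ℝ) ^ p := Real.mul_rpow (by norm_num) hb1.le
      calc (2:ℝ) ^ (-p) / (m:ℝ) ^ p = (2 ^ p * (m:ℝ) ^ p)⁻¹ := by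
            rw [Real.rpow_neg (by norm_num), mul_inv, div_eq_mul_inv]
        _ = ((2 * (m:ℝ)) ^ p)⁻¹ := by rw [h3]
        _ ≤ (((m:ℝ) + 1) ^ p)⁻¹ := h2
        _ = f m := by rw [hfdef]; simp [Real.rpow_neg (by positivity : (0:ℝ) ≤ (m:ℝ) + 1)]
    have hfinal : (2:ℝ) ^ (-p) / Z * (N:ℝ) / (m:ℝ) ^ p ≤ lam tm := by
      have hmp : (0:ℝ) < (m:ℝ) ^ p := Real.rpow_pos_of_pos (by linarith) _
      calc (2:ℝ) ^ (-p) / Z * (N:ℝ) / (m:ℝ) ^ p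
          = (N:ℝ) * ((2:ℝ) ^ (-p) / (m:ℝ) ^ p) / Z := by ring
        _ ≤ (N:ℝ) * f m / Z := by
            apply (div_le_div_iff_of_pos_right hZ0).mpr
            exact mul_le_mul_of_nonneg_left hfm (Nat.cast_nonneg N)
        _ ≤ (N:ℝ) * f m / T := div_le_div_of_nonneg_left (by positivity) hT0 hTZ
        _ = lam tm := by simp only [hlamdef, htm]
    exact le_trans hfinal hlamnorm
end
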